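/- Let s>0, x≥0 a real number, and m∈ℕ with m≥1. Then Σ_{k=0}^m (−1)^k/(k!(m−k)!) · (ψ(x+k+2s) − ψ(2s)) = −(1/m) · Γ(x+2s)/Γ(x+2s+m), where ψ = Γ'/Γ is the digamma function. -/

import Mathlib

noncomputable section

namespace HeatModel

/-- The digamma function `ψ = Γ'/Γ`. -/
def digamma (x : ℝ) : ℝ := deriv Real.Gamma x / Real.Gamma x

lemma gamma_ne_neg_nat {y : ℝ} (hy : 0 < y) : ∀ m : ℕ, y ≠ -m :=
  fun m => ((neg_nonpos.mpr (Nat.cast_nonneg m)).trans_lt hy).ne'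

lemma digamma_step {y : ℝ} (hy : 0 < y) : digamma (y + 1) - digamma y = 1 / y := by
  have hΓ : Real.Gamma y ≠ 0 := (Real.Gamma_pos_of_pos hy).ne'
  have hd : DifferentiableAt ℝ Real.Gamma y := Real.differentiableAt_Gamma (gamma_ne_neg_nat hy)
  have hd1 : DifferentiableAt ℝ Real.Gamma (y + 1) :=
    Real.differentiableAt_Gamma (gamma_ne_neg_nat (by linarith))
  have hA : HasDerivAt (fun t => Real.Gamma (t + 1)) (deriv Real.Gamma (y + 1)) y := by
    simpa [Function.comp_def] using (hd1.hasDerivAt).comp y ((hasDerivAt_id y).add_const 1)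
  have hB : HasDerivAt (fun t => Real.Gamma (t + 1))
      (1 * Real.Gamma y + y * deriv Real.Gamma y) y := by
    refine ((hasDerivAt_id y).mul hd.hasDerivAt).congr_of_eventuallyEq ?_
    filter_upwards [eventually_gt_nhds hy] with t ht
    exact Real.Gamma_add_one ht.ne'
  have hderiv : deriv Real.Gamma (y + 1) = Real.Gamma y + y * deriv Real.Gamma y := by
    simpa using hA.unique hB
  unfold digamma
  rw [hderiv, Real.Gamma_add_one hy.ne']
  field_simp
  ring

lemma fwdDiff_iter_digamma (m : ℕ) : ∀ y : ℝ, 0 < y →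
    (fwdDiff (1:ℝ))^[m + 1] digamma y
      = (-1) ^ m * (Nat.factorial m : ℝ) * Real.Gamma y / Real.Gamma (y + (m + 1 : ℕ)) := by
  induction m with
  | zero =>
    intro y hy
    have hΓ : Real.Gamma y ≠ 0 := (Real.Gamma_pos_of_pos hy).ne'
    have := digamma_step hy
    have hone : (fwdDiff (1:ℝ))^[0 + 1] digamma y = digamma (y + 1) - digamma y := rfl
    rw [hone, this]
    norm_num
    rw [Real.Gamma_add_one hy.ne']
    field_simp
  | succ n ih =>
    intro y hy
    have hy1 : (0:ℝ) < y + 1 := by linarith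
    have hΓ : Real.Gamma (y + (n + 1 : ℕ)) ≠ 0 :=
      (Real.Gamma_pos_of_pos (by positivity)).ne'
    have hΓ2 : Real.Gamma (y + (n + 2 : ℕ)) ≠ 0 :=
      (Real.Gamma_pos_of_pos (by positivity)).ne'
    rw [Function.iterate_succ_apply']
    have h1 := ih y hy
    have h2 := ih (y + 1) hy1
    simp only [fwdDiff, h1, h2]
    have e1 : Real.Gamma (y + 1) = y * Real.Gamma y := Real.Gamma_add_one hy.ne'
    have e2 : (y + 1) + (n + 1 : ℕ) = y + (n + 2 : ℕ) := by push_cast; ring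
    have e3 : Real.Gamma (y + (n + 2 : ℕ)) = (y + (n + 1 : ℕ)) * Real.Gamma (y + (n + 1 : ℕ)) := by
      have : y + (n + 2 : ℕ) = (y + (n + 1 : ℕ)) + 1 := by push_cast; ring
      rw [this, Real.Gamma_add_one (by positivity : (0:ℝ) < y + (n + 1 : ℕ)).ne']
    rw [e2, e1, e3]
    have hy' : (0:ℝ) < y + (n+1:ℕ) := by positivity
    rw [Nat.factorial_succ]
    field_simp
    push_cast
    ring



/-- The finite-difference identity for the digamma function (eq. (3.22) of
Frassek–Giardinà, eq. (4.25) of the paper):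
`Σ_{k=0}^m (−1)^k/(k!(m−k)!) (ψ(x+k+2s) − ψ(2s)) = −(1/m) Γ(x+2s)/Γ(x+2s+m)`. -/

theorem digamma_finite_difference (s : ℝ) (hs : 0 < s) (x : ℝ) (hx : 0 ≤ x)
    (m : ℕ) (hm : 1 ≤ m) :
    (∑ k ∈ Finset.range (m + 1),
        (-1 : ℝ) ^ k / ((Nat.factorial k : ℝ) * (Nat.factorial (m - k) : ℝ)) *
          (digamma (x + (k : ℝ) + 2 * s) - digamma (2 * s)))
    = -(1 / (m : ℝ)) * Real.Gamma (x + 2 * s) / Real.Gamma (x + 2 * s + (m : ℝ)) := by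
  obtain ⟨n, rfl⟩ : ∃ n, m = n + 1 := ⟨m - 1, (Nat.succ_pred_eq_of_pos hm).symm⟩
  set y := x + 2 * s with hy_def
  have hy : 0 < y := by positivity
  -- the alternating binomial sum vanishes
  have hB : (∑ k ∈ Finset.range (n + 2), (-1 : ℝ) ^ k * ((n+1).choose k : ℝ)) = 0 := by
    have := Int.alternating_sum_range_choose (n := n + 1)
    rw [if_neg (Nat.succ_ne_zero n)] at this
    have := congrArg (fun z : ℤ => (z : ℝ)) this
    push_cast at this
    simpa using this
  -- forward-difference formula
  have hF : (∑ k ∈ Finset.range (n + 2),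
      ((-1 : ℝ) ^ (n + 1 - k) * ((n+1).choose k : ℝ)) * digamma (y + k))
      = (-1) ^ n * (Nat.factorial n : ℝ) * Real.Gamma y / Real.Gamma (y + (n + 1 : ℕ)) := by
    rw [← fwdDiff_iter_digamma n y hy, fwdDiff_iter_eq_sum_shift]
    refine Finset.sum_congr rfl fun k _ => ?_
    push_cast [zsmul_eq_mul]
    norm_num
  -- flip signs inside hF
  have hA : (∑ k ∈ Finset.range (n + 2),
      ((-1 : ℝ) ^ k * ((n+1).choose k : ℝ)) * digamma (y + k))
      = -(Nat.factorial n : ℝ) * Real.Gamma y / Real.Gamma (y + (n + 1 : ℕ)) := by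
    have flip : ∀ k ∈ Finset.range (n + 2), ((-1 : ℝ) ^ k * ((n+1).choose k : ℝ)) * digamma (y + k)
        = (-1 : ℝ) ^ (n+1) * (((-1 : ℝ) ^ (n + 1 - k) * ((n+1).choose k : ℝ)) * digamma (y + k)) := by
      intro k hk
      have hk' : k ≤ n + 1 := Nat.lt_succ_iff.mp (Finset.mem_range.mp hk)
      have h1 : (-1 : ℝ) ^ (n+1) * (-1 : ℝ) ^ (n + 1 - k) = (-1 : ℝ) ^ k := by
        rw [← pow_add]
        have : n + 1 + (n + 1 - k) = 2 * (n + 1 - k) + k := by omega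
        rw [this, pow_add, pow_mul]
        norm_num
      rw [← mul_assoc, ← mul_assoc, h1]
    rw [Finset.sum_congr rfl flip, ← Finset.mul_sum, hF]
    have hodd : (-1:ℝ) ^ (n+1) * (-1) ^ n = -1 := by
      rw [← pow_add]; exact Odd.neg_one_pow ⟨n, by ring⟩
    rw [show ((-1:ℝ) ^ (n+1) * ((-1) ^ n * (Nat.factorial n : ℝ) * Real.Gamma y
          / Real.Gamma (y + (n + 1 : ℕ))))
        = ((-1:ℝ) ^ (n+1) * (-1) ^ n) * ((Nat.factorial n : ℝ) * Real.Gamma y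
          / Real.Gamma (y + (n + 1 : ℕ))) from by ring, hodd]
    ring
  -- rewrite each term of the goal sum
  have hterm : ∀ k ∈ Finset.range (n + 2),
      (-1 : ℝ) ^ k / ((Nat.factorial k : ℝ) * (Nat.factorial (n + 1 - k) : ℝ)) *
          (digamma (x + (k : ℝ) + 2 * s) - digamma (2 * s))
      = (1 / (Nat.factorial (n+1) : ℝ)) *
          (((-1 : ℝ) ^ k * ((n+1).choose k : ℝ)) * digamma (y + k)
            - ((-1 : ℝ) ^ k * ((n+1).choose k : ℝ)) * digamma (2 * s)) := by
    intro k hk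
    have hk' : k ≤ n + 1 := Nat.lt_succ_iff.mp (Finset.mem_range.mp hk)
    have hcf : ((n+1).choose k : ℝ) * (Nat.factorial k : ℝ) * (Nat.factorial (n + 1 - k) : ℝ)
        = (Nat.factorial (n+1) : ℝ) := by
      exact_mod_cast congrArg (Nat.cast (R := ℝ)) (Nat.choose_mul_factorial_mul_factorial hk')
    have hx' : x + (k : ℝ) + 2 * s = y + k := by rw [hy_def]; ring
    rw [hx']
    have f1 : (Nat.factorial k : ℝ) ≠ 0 := Nat.cast_ne_zero.mpr (Nat.factorial_ne_zero k)
    have f2 : (Nat.factorial (n + 1 - k) : ℝ) ≠ 0 := Nat.cast_ne_zero.mpr (Nat.factorial_ne_zero _)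
    have f3 : (Nat.factorial (n + 1) : ℝ) ≠ 0 := Nat.cast_ne_zero.mpr (Nat.factorial_ne_zero _)
    have hco : ((n+1).choose k : ℝ) / (Nat.factorial (n+1) : ℝ)
        = 1 / ((Nat.factorial k : ℝ) * (Nat.factorial (n + 1 - k) : ℝ)) := by
      rw [div_eq_div_iff f3 (by positivity)]
      linear_combination hcf
    rw [div_eq_mul_one_div, ← hco]
    ring
  rw [Finset.sum_congr rfl hterm, ← Finset.mul_sum]
  rw [Finset.sum_sub_distrib, ← Finset.sum_mul, hA, hB]
  have f3 : (Nat.factorial (n + 1) : ℝ) ≠ 0 := Nat.cast_ne_zero.mpr (Nat.factorial_ne_zero _)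
  have hΓ : Real.Gamma (y + (n + 1 : ℕ)) ≠ 0 := (Real.Gamma_pos_of_pos (by positivity)).ne'
  have hcast : y + ((n:ℝ) + 1) = y + ((n + 1 : ℕ) : ℝ) := by push_cast; ring
  rw [Nat.factorial_succ]
  push_cast
  rw [hcast]
  field_simp
  ring

end HeatModel
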